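/- Let a1, …, a5 > 0, b1 = (a1 + a2)/(1 + a4·a5), b2 = a2/(1 + a4·a5), b3 = a5/(1 + a4·a5), g(V) = (2·b3·V − b1)/(1 + a3·V) + b1 − b3·V, and H(V) = b1 − b2·(1 + a3·V)·exp(a3·(V + a4·g(V))) − 2·b3·V, and let V* > 0 be the unique positive zero of H. Let γ_V > 0 and let x : ℝ → ℝ be differentiable with x(t) > 0 and x′(t) = γ_V·H(x(t)) for all t ≥ 0. Then x(t) → V* as t → ∞. -/

import Mathlib

open Filter

/-- Auxiliary: a differentiable function on `[0,∞)` whose derivative is `≤ -c < 0`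
cannot stay bounded below. -/
lemma mpp_drift_down (f : ℝ → ℝ) (hf : Differentiable ℝ f) (c : ℝ) (hc : 0 < c)
    (hd : ∀ t ≥ (0:ℝ), deriv f t ≤ -c) (m : ℝ) (hm : ∀ t ≥ (0:ℝ), m ≤ f t) : False := by
  have hdiff : Differentiable ℝ (fun t => f t + c * t) :=
    hf.add (differentiable_id.const_mul c)
  have hanti : AntitoneOn (fun t => f t + c * t) (Set.Ici 0) := by
    apply antitoneOn_of_deriv_nonpos (convex_Ici 0)
    · exact hdiff.continuous.continuousOn
    · intro t ht
      exact (hdiff t).differentiableWithinAt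
    · intro t ht
      rw [interior_Ici] at ht
      have h1 : HasDerivAt (fun t => f t + c * t) (deriv f t + c) t := by
        simpa using ((hf t).hasDerivAt.fun_add ((hasDerivAt_id t).const_mul c))
      rw [h1.deriv]
      have := hd t (le_of_lt ht)
      linarith
  have key : ∀ t ≥ (0:ℝ), f t + c * t ≤ f 0 := by
    intro t ht
    have := hanti (Set.self_mem_Ici) (Set.mem_Ici.mpr ht) ht
    simpa using this
  have hT0 : (0:ℝ) ≤ (f 0 - m) / c + 1 := by
    have : 0 ≤ (f 0 - m) / c := by
      apply div_nonneg _ (le_of_lt hc)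
      have := hm 0 le_rfl; linarith
    linarith
  have h1 := key _ hT0
  have h2 := hm _ hT0
  have h3 : c * ((f 0 - m) / c + 1) = f 0 - m + c := by
    field_simp
  nlinarith

theorem mpp_observer_convergence
    (a1 a2 a3 a4 a5 b1 b2 b3 : ℝ)
    (ha1 : 0 < a1) (ha2 : 0 < a2) (ha3 : 0 < a3) (ha4 : 0 < a4) (ha5 : 0 < a5)
    (hb1 : b1 = (a1 + a2) / (1 + a4 * a5))
    (hb2 : b2 = a2 / (1 + a4 * a5))
    (hb3 : b3 = a5 / (1 + a4 * a5))
    (g H : ℝ → ℝ)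
    (hg : ∀ V, g V = (2 * b3 * V - b1) / (1 + a3 * V) + b1 - b3 * V)
    (hH : ∀ V, H V = b1 - b2 * (1 + a3 * V) * Real.exp (a3 * (V + a4 * g V)) - 2 * b3 * V)
    (Vstar : ℝ) (hVstar : 0 < Vstar) (hzero : H Vstar = 0)
    (huniq : ∀ V : ℝ, 0 < V → H V = 0 → V = Vstar)
    (γV : ℝ) (hγV : 0 < γV)
    (x : ℝ → ℝ) (hx : Differentiable ℝ x)
    (hpos : ∀ t ≥ (0:ℝ), 0 < x t)
    (hx' : ∀ t ≥ (0:ℝ), deriv x t = γV * H (x t)) :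
    Tendsto x atTop (nhds Vstar) := by
  have hden : (0:ℝ) < 1 + a4 * a5 := by positivity
  have hb2pos : 0 < b2 := by rw [hb2]; positivity
  have hb3pos : 0 < b3 := by rw [hb3]; positivity
  -- H(0) > 0
  have hg0 : g 0 = 0 := by rw [hg 0]; norm_num
  have hH0 : 0 < H 0 := by
    rw [hH 0, hg0]
    simp [Real.exp_zero]
    rw [hb1, hb2, div_lt_div_iff₀ hden hden]
    nlinarith
  -- continuity of H at nonnegative points
  have hHcont : ∀ V : ℝ, 0 ≤ V → ContinuousAt H V := by
    intro V hV
    have hfun : H = fun W => b1 - b2 * (1 + a3 * W) *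
        Real.exp (a3 * (W + a4 * ((2 * b3 * W - b1) / (1 + a3 * W) + b1 - b3 * W))) - 2 * b3 * W := by
      funext W; rw [hH W, hg W]
    rw [hfun]
    have hne : 1 + a3 * V ≠ 0 := by nlinarith
    fun_prop (disch := assumption)
  have hHcontOn : ∀ a b : ℝ, 0 ≤ a → ContinuousOn H (Set.Icc a b) := by
    intro a b ha V hV
    exact (hHcont V (le_trans ha hV.1)).continuousWithinAt
  -- upper bound on H for positive V
  have hHtop : ∀ V : ℝ, 0 < V → H V ≤ b1 - 2 * b3 * V := by
    intro V hV
    rw [hH V]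
    have hexp : 0 < Real.exp (a3 * (V + a4 * g V)) := Real.exp_pos _
    have h1 : 0 < 1 + a3 * V := by nlinarith
    nlinarith [mul_pos (mul_pos hb2pos h1) hexp]
  -- sign of H below Vstar
  have hHpos : ∀ V : ℝ, 0 ≤ V → V < Vstar → 0 < H V := by
    intro V hV0 hVlt
    by_contra hcon
    push_neg at hcon
    rcases eq_or_lt_of_le hcon with heq | hlt
    · rcases eq_or_lt_of_le hV0 with hV | hV
      · rw [← hV] at heq; linarith
      · exact absurd (huniq V hV heq) (ne_of_lt hVlt)
    · have hV : 0 < V := by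
        rcases eq_or_lt_of_le hV0 with h | h
        · rw [← h] at hlt; linarith
        · exact h
      have hsub : Set.Ioo (H V) (H 0) ⊆ H '' Set.Ioo 0 V :=
        intermediate_value_Ioo' (le_of_lt hV) (hHcontOn 0 V le_rfl)
      obtain ⟨c, hc, hHc⟩ := hsub ⟨hlt, hH0⟩
      have := huniq c hc.1 hHc
      linarith [hc.2]
  -- sign of H above Vstar
  have hHneg : ∀ V : ℝ, Vstar < V → H V < 0 := by
    intro V hV
    have hV0 : 0 < V := lt_trans hVstar hV
    by_contra hcon
    push_neg at hcon
    rcases eq_or_lt_of_le hcon with heq | hlt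
    · exact absurd (huniq V hV0 heq.symm) (ne_of_gt hV)
    · set M := max (V + 1) ((b1 + 1) / (2 * b3) + 1) with hM
      have hMV : V < M := lt_of_lt_of_le (by linarith) (le_max_left _ _)
      have hMb : (b1 + 1) / (2 * b3) + 1 ≤ M := le_max_right _ _
      have hM0 : 0 < M := lt_trans hV0 hMV
      have hHM : H M < 0 := by
        have h1 := hHtop M hM0
        have h2 : 2 * b3 * ((b1 + 1) / (2 * b3)) = b1 + 1 := by
          field_simp
        nlinarith
      have hsub : Set.Ioo (H M) (H V) ⊆ H '' Set.Ioo V M :=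
        intermediate_value_Ioo' (le_of_lt hMV) (hHcontOn V M (le_of_lt hV0))
      obtain ⟨c, hc, hHc⟩ := hsub ⟨hHM, hlt⟩
      have := huniq c (lt_trans hV0 hc.1) hHc
      linarith [hc.1]
  -- the Lyapunov function
  set W : ℝ → ℝ := fun t => (x t - Vstar) ^ 2 with hWdef
  have hWdiff : Differentiable ℝ W := by
    exact (hx.sub_const Vstar).pow 2
  have hWderiv : ∀ t : ℝ, deriv W t = 2 * (x t - Vstar) * deriv x t := by
    intro t
    have h1 : HasDerivAt x (deriv x t) t := (hx t).hasDerivAt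
    have h2 : HasDerivAt (fun t => (x t - Vstar) ^ 2)
        (2 * (x t - Vstar) * deriv x t) t := by
      have := (h1.sub_const Vstar).fun_pow 2
      simpa using this
    exact h2.deriv
  have hWd_nonpos : ∀ t ≥ (0:ℝ), deriv W t ≤ 0 := by
    intro t ht
    rw [hWderiv t, hx' t ht]
    rcases lt_trichotomy (x t) Vstar with h | h | h
    · have := hHpos (x t) (le_of_lt (hpos t ht)) h
      nlinarith [mul_pos (sub_pos.mpr h) (mul_pos hγV this)]
    · rw [h]; simp
    · have := hHneg (x t) h
      nlinarith [mul_pos (sub_pos.mpr h) (mul_pos hγV (neg_pos.mpr this))]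
  have hWanti : AntitoneOn W (Set.Ici 0) := by
    apply antitoneOn_of_deriv_nonpos (convex_Ici 0)
    · exact hWdiff.continuous.continuousOn
    · intro t ht
      exact (hWdiff t).differentiableWithinAt
    · intro t ht
      rw [interior_Ici] at ht
      exact hWd_nonpos t (le_of_lt ht)
  have hWnonneg : ∀ t : ℝ, 0 ≤ W t := fun t => sq_nonneg _
  by_cases hsmall : ∀ ε > (0:ℝ), ∃ t ≥ (0:ℝ), W t < ε
  · -- W tends to 0, hence x tends to Vstar
    have hW0 : Tendsto W atTop (nhds 0) := by
      rw [Metric.tendsto_atTop]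
      intro ε hε
      obtain ⟨t0, ht0, hWt0⟩ := hsmall ε hε
      refine ⟨t0, fun t ht => ?_⟩
      have htt : (0:ℝ) ≤ t := le_trans ht0 ht
      have h1 : W t ≤ W t0 := hWanti (Set.mem_Ici.mpr ht0) (Set.mem_Ici.mpr htt) ht
      have h2 := hWnonneg t
      rw [Real.dist_eq, abs_of_nonneg (by linarith)]
      linarith
    have hdist : Tendsto (fun t => |x t - Vstar|) atTop (nhds 0) := by
      have h := (Real.continuous_sqrt.tendsto 0).comp hW0
      simp only [Function.comp_def, hWdef, Real.sqrt_sq_eq_abs, Real.sqrt_zero] at h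
      exact h
    have hsub : Tendsto (fun t => x t - Vstar) atTop (nhds 0) :=
      squeeze_zero_norm (fun t => le_of_eq (Real.norm_eq_abs _)) hdist
    have := hsub.add_const Vstar
    simpa using this
  · push_neg at hsmall
    obtain ⟨ε, hε, hWlb'⟩ := hsmall
    have hWlb : ∀ t ≥ (0:ℝ), ε ≤ W t := fun t ht => le_of_not_gt (by
      intro h; exact absurd h (not_lt_of_ge (hWlb' t ht)))
    exfalso
    -- x never equals Vstar
    have hne : ∀ t ≥ (0:ℝ), x t ≠ Vstar := by
      intro t ht h
      have := hWlb t ht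
      rw [hWdef] at this
      simp only [h, sub_self] at this
      norm_num at this
      linarith
    -- the sign of x - Vstar is constant
    have hsign : (∀ t ≥ (0:ℝ), Vstar < x t) ∨ (∀ t ≥ (0:ℝ), x t < Vstar) := by
      by_contra hcontra
      push_neg at hcontra
      obtain ⟨⟨t1, ht1, h1⟩, ⟨t2, ht2, h2⟩⟩ := hcontra
      have h1' : x t1 < Vstar := lt_of_le_of_ne h1 (hne t1 ht1)
      have h2' : Vstar < x t2 := lt_of_le_of_ne h2 (Ne.symm (hne t2 ht2))
      rcases le_total t1 t2 with h | h
      · obtain ⟨c, hc, hxc⟩ := intermediate_value_Ioo h (hx.continuous.continuousOn)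
          (Set.mem_Ioo.mpr ⟨h1', h2'⟩)
        exact hne c (le_trans ht1 (le_of_lt hc.1)) hxc
      · obtain ⟨c, hc, hxc⟩ := intermediate_value_Ioo' h (hx.continuous.continuousOn)
          (Set.mem_Ioo.mpr ⟨h1', h2'⟩)
        exact hne c (le_trans ht2 (le_of_lt hc.1)) hxc
    -- bounds on |x t - Vstar|
    set p := Real.sqrt ε with hpdef
    set q := Real.sqrt (W 0) with hqdef
    have hp : 0 < p := Real.sqrt_pos.mpr hε
    have habs_lb : ∀ t ≥ (0:ℝ), p ≤ |x t - Vstar| := by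
      intro t ht
      have := Real.sqrt_le_sqrt (hWlb t ht)
      rwa [hWdef, Real.sqrt_sq_eq_abs] at this
    have habs_ub : ∀ t ≥ (0:ℝ), |x t - Vstar| ≤ q := by
      intro t ht
      have h1 : W t ≤ W 0 := hWanti (Set.self_mem_Ici) (Set.mem_Ici.mpr ht) ht
      have := Real.sqrt_le_sqrt h1
      rwa [hWdef, Real.sqrt_sq_eq_abs] at this
    rcases hsign with hup | hdown
    · -- x stays in [Vstar + p, Vstar + q], where H is negative
      have hset : ∀ t ≥ (0:ℝ), x t ∈ Set.Icc (Vstar + p) (Vstar + q) := by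
        intro t ht
        have h1 := habs_lb t ht
        have h2 := habs_ub t ht
        have h3 : 0 < x t - Vstar := sub_pos.mpr (hup t ht)
        rw [abs_of_pos h3] at h1 h2
        constructor <;> linarith
      have hpq : p ≤ q := by
        have h1 := habs_lb 0 le_rfl
        have h2 := habs_ub 0 le_rfl
        linarith
      obtain ⟨m, hm, hmax⟩ := (isCompact_Icc (a := Vstar + p) (b := Vstar + q)).exists_isMaxOn
        ⟨Vstar + p, Set.mem_Icc.mpr ⟨le_rfl, by linarith⟩⟩
        (hHcontOn (Vstar + p) (Vstar + q) (by linarith))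
      have hHm : H m < 0 := hHneg m (by have := hm.1; linarith)
      apply mpp_drift_down x hx (γV * (-H m)) (mul_pos hγV (neg_pos.mpr hHm)) _ (Vstar + p)
        (fun t ht => (hset t ht).1)
      intro t ht
      rw [hx' t ht]
      have hle : H (x t) ≤ H m := hmax (hset t ht)
      nlinarith [mul_le_mul_of_nonneg_left hle (le_of_lt hγV)]
    · -- x stays in (0, Vstar - p], where H is positive
      have hVp : 0 < Vstar - p := by
        have h1 := habs_lb 0 le_rfl
        have h3 : x 0 - Vstar < 0 := sub_neg.mpr (hdown 0 le_rfl)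
        rw [abs_of_neg h3] at h1
        have := hpos 0 le_rfl
        linarith
      have hset : ∀ t ≥ (0:ℝ), x t ∈ Set.Icc (0:ℝ) (Vstar - p) := by
        intro t ht
        have h1 := habs_lb t ht
        have h3 : x t - Vstar < 0 := sub_neg.mpr (hdown t ht)
        rw [abs_of_neg h3] at h1
        exact Set.mem_Icc.mpr ⟨le_of_lt (hpos t ht), by linarith⟩
      obtain ⟨m, hm, hmin⟩ := (isCompact_Icc (a := (0:ℝ)) (b := Vstar - p)).exists_isMinOn
        ⟨0, Set.mem_Icc.mpr ⟨le_rfl, le_of_lt hVp⟩⟩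
        (hHcontOn 0 (Vstar - p) le_rfl)
      have hHm : 0 < H m := hHpos m hm.1 (by have := hm.2; linarith)
      apply mpp_drift_down (fun t => -x t) hx.neg (γV * H m) (by positivity) _
        (-(Vstar - p)) (fun t ht => neg_le_neg (hset t ht).2)
      intro t ht
      rw [deriv.fun_neg, hx' t ht]
      have hle : H m ≤ H (x t) := hmin (hset t ht)
      nlinarith [mul_le_mul_of_nonneg_left hle (le_of_lt hγV)]
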